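/- Let 𝔤 be a nonabelian nilpotent Lie algebra with dim 𝔤' ≥ 2 and codim 𝔤' ≤ 2, such that dim Span(X₁,X₂,X₃,[X₁,X₂],[X₁,X₃],[X₂,X₃]) ≤ 4 for all triples. Then 𝔤 is isomorphic to the four-dimensional filiform Lie algebra with basis W, X, Y, Z and nonzero brackets [W,X]=Y, [W,Y]=Z. -/

import Mathlib

open Module Submodule LieModule

section aux
variable {L : Type*} [LieRing L] [LieAlgebra ℝ L] [FiniteDimensional ℝ L]
    [LieRing.IsNilpotent L]

lemma lcs_eq_bot_of_le' {k : ℕ}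
    (h : LieModule.lowerCentralSeries ℝ L L k ≤ LieModule.lowerCentralSeries ℝ L L (k+1)) :
    LieModule.lowerCentralSeries ℝ L L k = ⊥ := by
  have heq : LieModule.lowerCentralSeries ℝ L L (k+1) = LieModule.lowerCentralSeries ℝ L L k :=
    le_antisymm (antitone_lowerCentralSeries ℝ L L (Nat.le_succ k)) h
  have hstep : ∀ m, LieModule.lowerCentralSeries ℝ L L (k+m) = LieModule.lowerCentralSeries ℝ L L k := by
    intro m
    induction m with
    | zero => rfl
    | succ m ih =>
      rw [show k + (m+1) = (k+m)+1 by ring, lowerCentralSeries_succ, ih,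
        ← lowerCentralSeries_succ, heq]
  obtain ⟨N, hN⟩ := LieModule.isNilpotent_iff ℝ L L |>.mp inferInstance
  rw [← hstep N]
  exact le_bot_iff.mp ((antitone_lowerCentralSeries ℝ L L (Nat.le_add_left N k)).trans hN.le)

end aux

section aux2
variable {L : Type*} [LieRing L] [LieAlgebra ℝ L] [FiniteDimensional ℝ L]

set_option linter.unusedSectionVars false

/-- bracket span bound -/
lemma lcs_succ_le' {k : ℕ} {T : Submodule ℝ L}
    (h : ∀ a : L, ∀ w ∈ LieModule.lowerCentralSeries ℝ L L k, ⁅a, w⁆ ∈ T) :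
    (LieModule.lowerCentralSeries ℝ L L (k+1)).toSubmodule ≤ T := by
  rw [LieModule.lowerCentralSeries_succ, LieSubmodule.lieIdeal_oper_eq_linear_span']
  rw [Submodule.span_le]
  rintro m ⟨a, -, w, hw, rfl⟩
  exact h a w hw

lemma scal {T : Submodule ℝ L} {z : L} (hz : z ∉ T) {c : ℝ} (h : c • z ∈ T) : c = 0 := by
  by_contra hc
  exact hz (by simpa [smul_smul, inv_mul_cancel₀ hc] using T.smul_mem c⁻¹ h)

lemma five_not (X₁ X₂ X₃ : L)
    (hd : Module.finrank ℝ (Submodule.span ℝ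
      ({X₁, X₂, X₃, ⁅X₁, X₂⁆, ⁅X₁, X₃⁆, ⁅X₂, X₃⁆} : Set L)) ≤ 4)
    (v : Fin 5 → L)
    (hsub : Set.range v ⊆ ({X₁, X₂, X₃, ⁅X₁, X₂⁆, ⁅X₁, X₃⁆, ⁅X₂, X₃⁆} : Set L)) :
    ¬ LinearIndependent ℝ v := by
  intro hv
  have h5 : Module.finrank ℝ (Submodule.span ℝ (Set.range v)) = 5 := by
    rw [finrank_span_eq_card hv]; simp
  have hle := Submodule.finrank_mono (M := L) (s := Submodule.span ℝ (Set.range v))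
      (t := Submodule.span ℝ ({X₁, X₂, X₃, ⁅X₁, X₂⁆, ⁅X₁, X₃⁆, ⁅X₂, X₃⁆} : Set L))
      (Submodule.span_mono hsub)
  omega

end aux2

section aux3
variable {L : Type*} [LieRing L] [LieAlgebra ℝ L] [FiniteDimensional ℝ L]
    [LieRing.IsNilpotent L]

set_option linter.unusedSectionVars false

lemma mem_lcs_succ {k : ℕ} (a : L) {w : L} (h : w ∈ LieModule.lowerCentralSeries ℝ L L k) :
    ⁅a, w⁆ ∈ LieModule.lowerCentralSeries ℝ L L (k+1) := by
  rw [LieModule.lowerCentralSeries_succ]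
  exact LieSubmodule.lie_mem_lie (LieSubmodule.mem_top a) h

lemma mem_lcs_succ' {k : ℕ} (a : L) {w : L} (h : w ∈ LieModule.lowerCentralSeries ℝ L L k) :
    ⁅w, a⁆ ∈ LieModule.lowerCentralSeries ℝ L L (k+1) := by
  rw [← lie_skew, neg_mem_iff]
  exact mem_lcs_succ a h

lemma hdec {x y : L}
    (hsp : (⊤ : Submodule ℝ L) ≤ Submodule.span ℝ {x, y} ⊔ (LieModule.lowerCentralSeries ℝ L L 1).toSubmodule)
    (a : L) : ∃ s t : ℝ, ∃ d : L, d ∈ LieModule.lowerCentralSeries ℝ L L 1 ∧ a = s • x + t • y + d := by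
  have ha := hsp (Submodule.mem_top (x := a))
  rw [Submodule.mem_sup] at ha
  obtain ⟨p, hp, d, hd, rfl⟩ := ha
  rw [Submodule.mem_span_pair] at hp
  obtain ⟨s, t, rfl⟩ := hp
  exact ⟨s, t, d, hd, rfl⟩

end aux3

section aux4
variable {L : Type*} [LieRing L] [LieAlgebra ℝ L] [FiniteDimensional ℝ L]
    [LieRing.IsNilpotent L]

set_option linter.unusedSectionVars false

lemma hS1 {x y : L}
    (hsp : (⊤ : Submodule ℝ L) ≤ Submodule.span ℝ {x, y} ⊔ (LieModule.lowerCentralSeries ℝ L L 1).toSubmodule) :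
    (LieModule.lowerCentralSeries ℝ L L 1).toSubmodule ≤
      Submodule.span ℝ {⁅x, y⁆} ⊔ (LieModule.lowerCentralSeries ℝ L L 2).toSubmodule := by
  apply lcs_succ_le'
  intro a w _
  obtain ⟨s, t, d, hd, rfl⟩ := hdec hsp a
  obtain ⟨s', t', e, he, rfl⟩ := hdec hsp w
  set T := Submodule.span ℝ {⁅x, y⁆} ⊔ (LieModule.lowerCentralSeries ℝ L L 2).toSubmodule with hT
  have h2 : ∀ m ∈ LieModule.lowerCentralSeries ℝ L L 2, m ∈ T := fun m hm =>
    Submodule.mem_sup_right hm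
  have hu : ⁅x, y⁆ ∈ T := Submodule.mem_sup_left (Submodule.subset_span rfl)
  have hyx : ⁅y, x⁆ ∈ T := by
    rw [← lie_skew]; exact T.neg_mem hu
  have hxe : ⁅x, e⁆ ∈ T := h2 _ (mem_lcs_succ x he)
  have hye : ⁅y, e⁆ ∈ T := h2 _ (mem_lcs_succ y he)
  have hdw : ⁅d, s' • x + t' • y + e⁆ ∈ T := h2 _ (mem_lcs_succ' _ hd)
  have key : ⁅s • x + t • y + d, s' • x + t' • y + e⁆ =
      s • (t' • ⁅x, y⁆ + ⁅x, e⁆) + t • (s' • ⁅y, x⁆ + ⁅y, e⁆) + ⁅d, s' • x + t' • y + e⁆ := by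
    simp only [add_lie, lie_add, lie_smul, smul_lie, lie_self, smul_zero, zero_add, smul_add]
    module
  rw [key]
  exact T.add_mem (T.add_mem (T.smul_mem s (T.add_mem (T.smul_mem t' hu) hxe))
    (T.smul_mem t (T.add_mem (T.smul_mem s' hyx) hye))) hdw

lemma hone {z : L}
    (hz : (⊤ : Submodule ℝ L) ≤ Submodule.span ℝ {z, z} ⊔ (LieModule.lowerCentralSeries ℝ L L 1).toSubmodule)
    (hder2 : LieModule.lowerCentralSeries ℝ L L 1 ≠ ⊥) : False := by
  have h1 := hS1 hz
  have h2 : Submodule.span ℝ {⁅z, z⁆} ≤ (LieModule.lowerCentralSeries ℝ L L 2).toSubmodule := by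
    rw [lie_self]
    simp [Submodule.span_le]
  have h3 : LieModule.lowerCentralSeries ℝ L L 1 ≤ LieModule.lowerCentralSeries ℝ L L 2 := by
    rw [← LieSubmodule.toSubmodule_le_toSubmodule]
    exact h1.trans (sup_le h2 le_rfl)
  exact hder2 (lcs_eq_bot_of_le' h3)

end aux4

section aux5
variable {L : Type*} [LieRing L] [LieAlgebra ℝ L] [FiniteDimensional ℝ L]
    [LieRing.IsNilpotent L]

set_option linter.unusedSectionVars false

lemma hindep {x y : L}
    (hsp : (⊤ : Submodule ℝ L) ≤ Submodule.span ℝ {x, y} ⊔ (LieModule.lowerCentralSeries ℝ L L 1).toSubmodule)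
    (hder2 : LieModule.lowerCentralSeries ℝ L L 1 ≠ ⊥)
    (a b : ℝ) (hab : a • x + b • y ∈ (LieModule.lowerCentralSeries ℝ L L 1).toSubmodule) :
    a = 0 ∧ b = 0 := by
  by_contra hcon
  set g2 := (LieModule.lowerCentralSeries ℝ L L 1).toSubmodule with hg2
  have key : ∀ z w : L, w ∈ Submodule.span ℝ {z} ⊔ g2 →
      (⊤ : Submodule ℝ L) ≤ Submodule.span ℝ {w, z} ⊔ g2 → False := by
    intro z w hw hzw
    apply hone (z := z) ?_ hder2
    refine hzw.trans (sup_le ?_ le_sup_right)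
    rw [Submodule.span_le]
    rintro m hm
    rcases hm with rfl | rfl
    · have : Submodule.span ℝ {m} ≤ Submodule.span ℝ ({z, z} : Set L) ⊔ g2 := by
        rw [Submodule.span_le]; intro p hp
        rcases hp with rfl
        have h1 : Submodule.span ℝ ({z} : Set L) ≤ Submodule.span ℝ ({z, z} : Set L) :=
          Submodule.span_mono (by simp)
        exact (sup_le (h1.trans le_sup_left) le_sup_right) hw
      exact this (Submodule.mem_span_singleton_self m)
    · exact Submodule.mem_sup_left (Submodule.subset_span (by simp))
  rcases not_and_or.mp hcon with ha | hb
  · -- a ≠ 0 : x ∈ span{y} ⊔ g2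
    have hx : x ∈ Submodule.span ℝ ({y} : Set L) ⊔ g2 := by
      have : x = a⁻¹ • (a • x + b • y) - (a⁻¹ * b) • y := by
        field_simp [smul_smul, smul_add]
        match_scalars <;> field_simp <;> ring
      rw [this]
      exact Submodule.sub_mem _ (Submodule.mem_sup_right (Submodule.smul_mem _ _ hab))
        (Submodule.mem_sup_left (Submodule.smul_mem _ _ (Submodule.mem_span_singleton_self y)))
    refine key y x hx (hsp.trans (sup_le ?_ le_sup_right))
    rw [Submodule.span_le]
    rintro m (rfl | rfl)
    · exact Submodule.mem_sup_left (Submodule.subset_span (by simp))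
    · exact Submodule.mem_sup_left (Submodule.subset_span (by simp))
  · have hy : y ∈ Submodule.span ℝ ({x} : Set L) ⊔ g2 := by
      have : y = b⁻¹ • (a • x + b • y) - (b⁻¹ * a) • x := by
        field_simp [smul_smul, smul_add]
        match_scalars <;> field_simp <;> ring
      rw [this]
      exact Submodule.sub_mem _ (Submodule.mem_sup_right (Submodule.smul_mem _ _ hab))
        (Submodule.mem_sup_left (Submodule.smul_mem _ _ (Submodule.mem_span_singleton_self x)))
    refine key x y hy (hsp.trans (sup_le ?_ le_sup_right))
    rw [Submodule.span_le]
    rintro m (rfl | rfl)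
    · exact Submodule.mem_sup_left (Submodule.subset_span (by simp))
    · exact Submodule.mem_sup_left (Submodule.subset_span (by simp))

end aux5

section aux6
variable {L : Type*} [LieRing L] [LieAlgebra ℝ L] [FiniteDimensional ℝ L]
    [LieRing.IsNilpotent L]

set_option linter.unusedSectionVars false

lemma hunot {x y : L}
    (hsp : (⊤ : Submodule ℝ L) ≤ Submodule.span ℝ {x, y} ⊔ (LieModule.lowerCentralSeries ℝ L L 1).toSubmodule)
    (hder2 : LieModule.lowerCentralSeries ℝ L L 1 ≠ ⊥) :
    ⁅x, y⁆ ∉ (LieModule.lowerCentralSeries ℝ L L 2).toSubmodule := by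
  intro hu
  have h3 : LieModule.lowerCentralSeries ℝ L L 1 ≤ LieModule.lowerCentralSeries ℝ L L 2 := by
    rw [← LieSubmodule.toSubmodule_le_toSubmodule]
    refine (hS1 hsp).trans (sup_le ?_ le_rfl)
    rw [Submodule.span_le]; rintro m rfl; exact hu
  exact hder2 (lcs_eq_bot_of_le' h3)

lemma hS2 {x y : L}
    (hsp : (⊤ : Submodule ℝ L) ≤ Submodule.span ℝ {x, y} ⊔ (LieModule.lowerCentralSeries ℝ L L 1).toSubmodule)
    (hyu : ⁅y, ⁅x, y⁆⁆ = 0) :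
    (LieModule.lowerCentralSeries ℝ L L 2).toSubmodule ≤
      Submodule.span ℝ {⁅x, ⁅x, y⁆⁆} ⊔ (LieModule.lowerCentralSeries ℝ L L 3).toSubmodule := by
  apply lcs_succ_le'
  intro a w hw
  set u := ⁅x, y⁆ with hu
  set T := Submodule.span ℝ {⁅x, u⁆} ⊔ (LieModule.lowerCentralSeries ℝ L L 3).toSubmodule with hT
  have h3 : ∀ m ∈ LieModule.lowerCentralSeries ℝ L L 3, m ∈ T := fun m hm =>
    Submodule.mem_sup_right hm
  -- decompose w via hS1
  have hw1 := hS1 hsp hw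
  rw [Submodule.mem_sup] at hw1
  obtain ⟨p, hp, w', hw', rfl⟩ := hw1
  rw [Submodule.mem_span_singleton] at hp
  obtain ⟨c, rfl⟩ := hp
  obtain ⟨s, t, d, hd, rfl⟩ := hdec hsp a
  -- the key term ⁅d, u⁆ is in lcs 3
  have hdu : ⁅d, u⁆ ∈ LieModule.lowerCentralSeries ℝ L L 3 := by
    have hd1 := hS1 hsp hd
    rw [Submodule.mem_sup] at hd1
    obtain ⟨q, hq, e, he, hde⟩ := hd1
    rw [Submodule.mem_span_singleton] at hq
    obtain ⟨c', rfl⟩ := hq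
    have : d = c' • u + e := hde.symm
    rw [this]
    simp only [add_lie, smul_lie, lie_self, smul_zero, zero_add]
    exact mem_lcs_succ' u he
  have key : ⁅s • x + t • y + d, c • u + w'⁆ =
      (c * s) • ⁅x, u⁆ + ((c * t) • ⁅y, u⁆ + (c • ⁅d, u⁆ + ⁅s • x + t • y + d, w'⁆)) := by
    simp only [add_lie, lie_add, lie_smul, smul_lie, smul_add]
    module
  rw [key, hyu]
  refine T.add_mem (Submodule.mem_sup_left (Submodule.smul_mem _ _ (Submodule.mem_span_singleton_self _))) ?_
  refine T.add_mem (by simpa using T.zero_mem) ?_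
  exact T.add_mem (T.smul_mem _ (h3 _ hdu)) (h3 _ (mem_lcs_succ _ hw'))

lemma hvnot {x y : L}
    (hsp : (⊤ : Submodule ℝ L) ≤ Submodule.span ℝ {x, y} ⊔ (LieModule.lowerCentralSeries ℝ L L 1).toSubmodule)
    (hyu : ⁅y, ⁅x, y⁆⁆ = 0)
    (hder : 2 ≤ Module.finrank ℝ (LieModule.lowerCentralSeries ℝ L L 1).toSubmodule) :
    ⁅x, ⁅x, y⁆⁆ ∉ (LieModule.lowerCentralSeries ℝ L L 3).toSubmodule := by
  intro hv
  have h3 : LieModule.lowerCentralSeries ℝ L L 2 ≤ LieModule.lowerCentralSeries ℝ L L 3 := by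
    rw [← LieSubmodule.toSubmodule_le_toSubmodule]
    refine (hS2 hsp hyu).trans (sup_le ?_ le_rfl)
    rw [Submodule.span_le]; rintro m rfl; exact hv
  have hbot : LieModule.lowerCentralSeries ℝ L L 2 = ⊥ := lcs_eq_bot_of_le' h3
  have h1 : (LieModule.lowerCentralSeries ℝ L L 1).toSubmodule ≤ Submodule.span ℝ {⁅x, y⁆} := by
    refine (hS1 hsp).trans (sup_le le_rfl ?_)
    rw [hbot]
    simp
  have h2 : Module.finrank ℝ (Submodule.span ℝ ({⁅x, y⁆} : Set L)) ≤ 1 := by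
    refine (finrank_span_le_card _).trans ?_
    simp
  have h4 := (Submodule.finrank_mono h1).trans h2
  omega

end aux6

section aux7
variable {L : Type*} [LieRing L] [LieAlgebra ℝ L] [FiniteDimensional ℝ L]
    [LieRing.IsNilpotent L]

set_option linter.unusedSectionVars false

lemma resolve3 {x y u : L}
    (hsp : (⊤ : Submodule ℝ L) ≤ Submodule.span ℝ {x, y} ⊔ (LieModule.lowerCentralSeries ℝ L L 1).toSubmodule)
    (hder2 : LieModule.lowerCentralSeries ℝ L L 1 ≠ ⊥)
    (hu2 : u ∈ LieModule.lowerCentralSeries ℝ L L 1)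
    (hu3 : u ∉ (LieModule.lowerCentralSeries ℝ L L 2).toSubmodule)
    {a b c : ℝ} {r : L} (hr : r ∈ LieModule.lowerCentralSeries ℝ L L 2)
    (h : a • x + b • y + c • u + r = 0) :
    a = 0 ∧ b = 0 ∧ c = 0 ∧ r = 0 := by
  have hr1 : r ∈ LieModule.lowerCentralSeries ℝ L L 1 :=
    antitone_lowerCentralSeries ℝ L L (by norm_num) hr
  have hmem : a • x + b • y ∈ (LieModule.lowerCentralSeries ℝ L L 1).toSubmodule := by
    have : a • x + b • y = -(c • u + r) := by
      have := h; linear_combination (norm := module) this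
    rw [this]
    exact Submodule.neg_mem _ (Submodule.add_mem _ (Submodule.smul_mem _ _ hu2) hr1)
  obtain ⟨ha, hb⟩ := hindep hsp hder2 a b hmem
  subst ha hb
  have h' : c • u + r = 0 := by linear_combination (norm := module) h
  have hc : c = 0 := by
    refine scal hu3 (c := c) ?_
    have : c • u = -r := by linear_combination (norm := module) h'
    rw [this]
    exact Submodule.neg_mem _ hr
  subst hc
  refine ⟨rfl, rfl, rfl, ?_⟩
  linear_combination (norm := module) h'

lemma resolve4 {x y u v : L}
    (hsp : (⊤ : Submodule ℝ L) ≤ Submodule.span ℝ {x, y} ⊔ (LieModule.lowerCentralSeries ℝ L L 1).toSubmodule)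
    (hder2 : LieModule.lowerCentralSeries ℝ L L 1 ≠ ⊥)
    (hu2 : u ∈ LieModule.lowerCentralSeries ℝ L L 1)
    (hu3 : u ∉ (LieModule.lowerCentralSeries ℝ L L 2).toSubmodule)
    (hv3 : v ∈ LieModule.lowerCentralSeries ℝ L L 2)
    (hv4 : v ∉ (LieModule.lowerCentralSeries ℝ L L 3).toSubmodule)
    {a b c d : ℝ} {r : L} (hr : r ∈ LieModule.lowerCentralSeries ℝ L L 3)
    (h : a • x + b • y + c • u + (d • v + r) = 0) :
    a = 0 ∧ b = 0 ∧ c = 0 ∧ d = 0 ∧ r = 0 := by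
  have hr2 : r ∈ LieModule.lowerCentralSeries ℝ L L 2 :=
    antitone_lowerCentralSeries ℝ L L (by norm_num) hr
  have hdvr : d • v + r ∈ LieModule.lowerCentralSeries ℝ L L 2 :=
    Submodule.add_mem _ (Submodule.smul_mem _ _ hv3) hr2
  obtain ⟨ha, hb, hc, h0⟩ := resolve3 hsp hder2 hu2 hu3 hdvr h
  have hd : d = 0 := by
    refine scal hv4 (c := d) ?_
    have : d • v = -r := by linear_combination (norm := module) h0
    rw [this]
    exact Submodule.neg_mem _ hr
  subst hd
  exact ⟨ha, hb, hc, rfl, by linear_combination (norm := module) h0⟩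

end aux7
theorem stmt_9 (L : Type*) [LieRing L] [LieAlgebra ℝ L] [FiniteDimensional ℝ L]
    [LieRing.IsNilpotent L]
    (hna : ∃ x y : L, ⁅x, y⁆ ≠ 0)
    (hder : 2 ≤ Module.finrank ℝ (⁅(⊤ : LieIdeal ℝ L), (⊤ : LieIdeal ℝ L)⁆ : LieIdeal ℝ L))
    (hcodim : Module.finrank ℝ L ≤
      Module.finrank ℝ (⁅(⊤ : LieIdeal ℝ L), (⊤ : LieIdeal ℝ L)⁆ : LieIdeal ℝ L) + 2)
    (hdim : ∀ X₁ X₂ X₃ : L,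
      Module.finrank ℝ (Submodule.span ℝ
        ({X₁, X₂, X₃, ⁅X₁, X₂⁆, ⁅X₁, X₃⁆, ⁅X₂, X₃⁆} : Set L)) ≤ 4) :
    ∃ b : Module.Basis (Fin 4) ℝ L,
      ⁅b 0, b 1⁆ = b 2 ∧ ⁅b 0, b 2⁆ = b 3 ∧ ⁅b 0, b 3⁆ = 0 ∧
      ⁅b 1, b 2⁆ = 0 ∧ ⁅b 1, b 3⁆ = 0 ∧ ⁅b 2, b 3⁆ = 0 := by
  classical
  have hlcs1 : (⁅(⊤ : LieIdeal ℝ L), (⊤ : LieIdeal ℝ L)⁆ : LieIdeal ℝ L)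
      = LieModule.lowerCentralSeries ℝ L L 1 := by
    rw [LieModule.lowerCentralSeries_succ, LieModule.lowerCentralSeries_zero]
  rw [hlcs1] at hder hcodim
  have hder' : 2 ≤ Module.finrank ℝ (LieModule.lowerCentralSeries ℝ L L 1).toSubmodule := hder
  have hcodim' : Module.finrank ℝ L ≤
      Module.finrank ℝ (LieModule.lowerCentralSeries ℝ L L 1).toSubmodule + 2 := hcodim
  have hder2 : LieModule.lowerCentralSeries ℝ L L 1 ≠ ⊥ := by
    intro hb
    rw [hb] at hder'
    simp [LieSubmodule.bot_toSubmodule] at hder'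
  -- complement of the derived algebra
  obtain ⟨W, hW⟩ := Submodule.exists_isCompl (LieModule.lowerCentralSeries ℝ L L 1).toSubmodule
  have hadd := Submodule.finrank_add_eq_of_isCompl hW
  have hW2 : Module.finrank ℝ W ≤ 2 := by omega
  -- spanning pair for the complement
  obtain ⟨x0, y0, hsp0⟩ : ∃ x y : L, (⊤ : Submodule ℝ L) ≤
      Submodule.span ℝ {x, y} ⊔ (LieModule.lowerCentralSeries ℝ L L 1).toSubmodule := by
    set n := Module.finrank ℝ W with hn
    let b := Module.finBasis ℝ W
    refine ⟨if h : 0 < n then (b ⟨0, h⟩ : L) else 0, if h : 1 < n then (b ⟨1, h⟩ : L) else 0, ?_⟩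
    have hWb : W = Submodule.span ℝ (Set.range fun i => ((b i : L))) := by
      conv_lhs => rw [← Submodule.map_subtype_top W]
      rw [← b.span_eq, Submodule.map_span]
      congr 1
      ext m
      simp [Set.range_comp]
    have hWle : W ≤ Submodule.span ℝ
        {if h : 0 < n then (b ⟨0, h⟩ : L) else 0, if h : 1 < n then (b ⟨1, h⟩ : L) else 0} := by
      refine le_trans (le_of_eq hWb) ?_
      rw [Submodule.span_le]
      rintro _ ⟨i, rfl⟩
      have hi := i.isLt
      apply Submodule.subset_span
      rcases (by omega : (i : ℕ) = 0 ∨ (i : ℕ) = 1) with h0 | h1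
      · left
        rw [dif_pos (by omega : 0 < n)]
        congr 2
        exact Fin.ext h0
      · right
        rw [Set.mem_singleton_iff, dif_pos (by omega : 1 < n)]
        congr 2
        exact Fin.ext h1
    calc (⊤ : Submodule ℝ L) = (LieModule.lowerCentralSeries ℝ L L 1).toSubmodule ⊔ W :=
          hW.sup_eq_top.symm
      _ ≤ _ := by rw [sup_comm]; exact sup_le (hWle.trans le_sup_left) le_sup_right
  -- Step: find a good pair (x, y) with ⁅y, ⁅x, y⁆⁆ = 0
  obtain ⟨x, y, hsp, hyu⟩ : ∃ x y : L, ((⊤ : Submodule ℝ L) ≤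
      Submodule.span ℝ {x, y} ⊔ (LieModule.lowerCentralSeries ℝ L L 1).toSubmodule) ∧
      ⁅y, ⁅x, y⁆⁆ = 0 := by
    set u0 := ⁅x0, y0⁆ with hu0
    have hu0two : u0 ∈ LieModule.lowerCentralSeries ℝ L L 1 := by
      apply mem_lcs_succ
      rw [LieModule.lowerCentralSeries_zero]
      exact LieSubmodule.mem_top y0
    have hu0not : u0 ∉ (LieModule.lowerCentralSeries ℝ L L 2).toSubmodule := hunot hsp0 hder2
    -- find dependence between ⁅x0,u0⁆ and ⁅y0,u0⁆
    obtain ⟨α, β, hαβ, hzero⟩ : ∃ α β : ℝ, ¬(α = 0 ∧ β = 0) ∧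
        α • ⁅x0, u0⁆ + β • ⁅y0, u0⁆ = 0 := by
      by_contra hcon
      push_neg at hcon
      have hli : LinearIndependent ℝ ![x0, y0, u0, ⁅x0, u0⁆, ⁅y0, u0⁆] := by
        rw [Fintype.linearIndependent_iff]
        intro g hg
        rw [Fin.sum_univ_five] at hg
        simp only [Matrix.cons_val_zero, Matrix.cons_val_one, Matrix.head_cons,
          Matrix.cons_val_two, Matrix.tail_cons, Matrix.cons_val_three, Matrix.cons_val_four] at hg
        have hp : ⁅x0, u0⁆ ∈ LieModule.lowerCentralSeries ℝ L L 2 := mem_lcs_succ x0 hu0two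
        have hq : ⁅y0, u0⁆ ∈ LieModule.lowerCentralSeries ℝ L L 2 := mem_lcs_succ y0 hu0two
        have hr : g 3 • ⁅x0, u0⁆ + g 4 • ⁅y0, u0⁆ ∈ LieModule.lowerCentralSeries ℝ L L 2 :=
          Submodule.add_mem _ (Submodule.smul_mem _ _ hp) (Submodule.smul_mem _ _ hq)
        have heq : g 0 • x0 + g 1 • y0 + g 2 • u0 + (g 3 • ⁅x0, u0⁆ + g 4 • ⁅y0, u0⁆) = 0 := by
          linear_combination (norm := module) hg
        obtain ⟨h0, h1, h2, h34⟩ := resolve3 hsp0 hder2 hu0two hu0not hr heq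
        have h34' : g 3 = 0 ∧ g 4 = 0 := by
          by_contra hc
          exact (hcon (g 3) (g 4) (fun h3 h4 => hc ⟨h3, h4⟩)) h34
        intro i
        fin_cases i <;> simp [h0, h1, h2, h34'.1, h34'.2]
      exact five_not x0 y0 u0 (hdim x0 y0 u0) _ (by
        rw [Set.range_subset_iff]
        intro i
        fin_cases i <;> simp [Set.mem_insert_iff]) hli
    by_cases hα : α = 0
    · -- then β ≠ 0 and ⁅y0, u0⁆ = 0
      have hβ : β ≠ 0 := by tauto
      refine ⟨x0, y0, hsp0, ?_⟩
      rw [hα, zero_smul, zero_add] at hzero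
      rw [← hu0]
      exact (smul_eq_zero.mp hzero).resolve_left hβ
    · -- replace the pair
      refine ⟨(-α)⁻¹ • y0, α • x0 + β • y0, ?_, ?_⟩
      · refine hsp0.trans (sup_le ?_ le_sup_right)
        rw [Submodule.span_le]
        have hα' : -α ≠ 0 := neg_ne_zero.mpr hα
        set S := Submodule.span ℝ ({(-α)⁻¹ • y0, α • x0 + β • y0} : Set L) with hS
        have hmem1 : ((-α)⁻¹ • y0) ∈ S := Submodule.subset_span (Set.mem_insert _ _)
        have hmem2 : (α • x0 + β • y0) ∈ S := Submodule.subset_span (Set.mem_insert_iff.mpr (Or.inr rfl))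
        have hy0 : y0 ∈ S := by
          have hthis : y0 = (-α) • ((-α)⁻¹ • y0) := by
            match_scalars <;> field_simp <;> ring
          rw [hthis]
          exact S.smul_mem _ hmem1
        have hx0 : x0 ∈ S := by
          have hthis : x0 = α⁻¹ • (α • x0 + β • y0) + (α⁻¹ * β * α) • ((-α)⁻¹ • y0) := by
            match_scalars <;> field_simp <;> ring
          rw [hthis]
          exact S.add_mem (S.smul_mem _ hmem2) (S.smul_mem _ hmem1)
        rintro m (rfl | rfl)
        · exact Submodule.mem_sup_left hx0
        · exact Submodule.mem_sup_left hy0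
      · have hbr : ⁅(-α)⁻¹ • y0, α • x0 + β • y0⁆ = u0 := by
          have h1 : ⁅(-α)⁻¹ • y0, α • x0 + β • y0⁆ = ((-α)⁻¹ * α) • ⁅y0, x0⁆ := by
            simp only [smul_lie, lie_add, lie_smul, lie_self, smul_zero, add_zero, smul_smul]
            module
          rw [h1, hu0, ← lie_skew x0 y0]
          have : (-α)⁻¹ * α = -1 := by field_simp
          rw [this]
          module
        rw [hbr]
        have : ⁅α • x0 + β • y0, u0⁆ = α • ⁅x0, u0⁆ + β • ⁅y0, u0⁆ := by
          simp [add_lie, smul_lie]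
        rw [this, hzero]
  -- now set up u and v
  set u := ⁅x, y⁆ with hu
  set v := ⁅x, u⁆ with hv
  have hu2 : u ∈ LieModule.lowerCentralSeries ℝ L L 1 := by
    rw [hu]
    apply mem_lcs_succ
    rw [LieModule.lowerCentralSeries_zero]
    exact LieSubmodule.mem_top y
  have hu3 : u ∉ (LieModule.lowerCentralSeries ℝ L L 2).toSubmodule := hunot hsp hder2
  have hv3 : v ∈ LieModule.lowerCentralSeries ℝ L L 2 := mem_lcs_succ x hu2
  have hv4 : v ∉ (LieModule.lowerCentralSeries ℝ L L 3).toSubmodule := hvnot hsp hyu hder'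
  -- the remaining brackets vanish
  have hxv : ⁅x, v⁆ = 0 := by
    by_contra hne
    have hp : ⁅x, v⁆ ∈ LieModule.lowerCentralSeries ℝ L L 3 := mem_lcs_succ x hv3
    have hli : LinearIndependent ℝ ![x, y, u, v, ⁅x, v⁆] := by
      rw [Fintype.linearIndependent_iff]
      intro g hg
      rw [Fin.sum_univ_five] at hg
      simp only [Matrix.cons_val_zero, Matrix.cons_val_one, Matrix.head_cons,
        Matrix.cons_val_two, Matrix.tail_cons, Matrix.cons_val_three, Matrix.cons_val_four] at hg
      have heq : g 0 • x + g 1 • y + g 2 • u + (g 3 • v + g 4 • ⁅x, v⁆) = 0 := by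
        linear_combination (norm := module) hg
      obtain ⟨h0, h1, h2, h3, h4⟩ := resolve4 hsp hder2 hu2 hu3 hv3 hv4
        (Submodule.smul_mem _ _ hp) heq
      have hg4 : g 4 = 0 := by
        rcases smul_eq_zero.mp h4 with h | h
        · exact h
        · exact absurd h hne
      intro i
      fin_cases i <;> simp [h0, h1, h2, h3, hg4]
    refine five_not x y v (hdim x y v) _ ?_ hli
    rw [Set.range_subset_iff]
    intro i
    fin_cases i <;> simp [Set.mem_insert_iff, hu.symm, hv.symm]
  have hyv : ⁅y, v⁆ = 0 := by
    by_contra hne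
    have hp : ⁅y, v⁆ ∈ LieModule.lowerCentralSeries ℝ L L 3 := mem_lcs_succ y hv3
    have hli : LinearIndependent ℝ ![x, y, u, v, ⁅y, v⁆] := by
      rw [Fintype.linearIndependent_iff]
      intro g hg
      rw [Fin.sum_univ_five] at hg
      simp only [Matrix.cons_val_zero, Matrix.cons_val_one, Matrix.head_cons,
        Matrix.cons_val_two, Matrix.tail_cons, Matrix.cons_val_three, Matrix.cons_val_four] at hg
      have heq : g 0 • x + g 1 • y + g 2 • u + (g 3 • v + g 4 • ⁅y, v⁆) = 0 := by
        linear_combination (norm := module) hg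
      obtain ⟨h0, h1, h2, h3, h4⟩ := resolve4 hsp hder2 hu2 hu3 hv3 hv4
        (Submodule.smul_mem _ _ hp) heq
      have hg4 : g 4 = 0 := by
        rcases smul_eq_zero.mp h4 with h | h
        · exact h
        · exact absurd h hne
      intro i
      fin_cases i <;> simp [h0, h1, h2, h3, hg4]
    refine five_not x y v (hdim x y v) _ ?_ hli
    rw [Set.range_subset_iff]
    intro i
    fin_cases i <;> simp [Set.mem_insert_iff, hu.symm, hv.symm]
  have huv : ⁅u, v⁆ = 0 := by
    by_contra hne
    have hp : ⁅u, v⁆ ∈ LieModule.lowerCentralSeries ℝ L L 3 := mem_lcs_succ u hv3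
    have hli : LinearIndependent ℝ ![x, y + u, v, u + v, ⁅u, v⁆] := by
      rw [Fintype.linearIndependent_iff]
      intro g hg
      rw [Fin.sum_univ_five] at hg
      simp only [Matrix.cons_val_zero, Matrix.cons_val_one, Matrix.head_cons,
        Matrix.cons_val_two, Matrix.tail_cons, Matrix.cons_val_three, Matrix.cons_val_four] at hg
      have heq : g 0 • x + g 1 • y + (g 1 + g 3) • u + ((g 2 + g 3) • v + g 4 • ⁅u, v⁆) = 0 := by
        linear_combination (norm := module) hg
      obtain ⟨h0, h1, h13, h23, h4⟩ := resolve4 hsp hder2 hu2 hu3 hv3 hv4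
        (Submodule.smul_mem _ _ hp) heq
      have hg4 : g 4 = 0 := by
        rcases smul_eq_zero.mp h4 with h | h
        · exact h
        · exact absurd h hne
      have hg3 : g 3 = 0 := by rw [h1] at h13; linarith
      have hg2 : g 2 = 0 := by rw [hg3] at h23; linarith
      intro i
      fin_cases i <;> simp [h0, h1, hg2, hg3, hg4]
    refine five_not x (y + u) v (hdim x (y + u) v) _ ?_ hli
    rw [Set.range_subset_iff]
    have hbr1 : ⁅x, y + u⁆ = u + v := by rw [lie_add, ← hu, ← hv]
    have hbr2 : ⁅y + u, v⁆ = ⁅u, v⁆ := by rw [add_lie, hyv, zero_add]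
    intro i
    fin_cases i <;> simp [Set.mem_insert_iff, hbr1, hbr2]
  -- lcs 3 = ⊥
  have hbot3 : LieModule.lowerCentralSeries ℝ L L 3 = ⊥ := by
    apply lcs_eq_bot_of_le'
    rw [← LieSubmodule.toSubmodule_le_toSubmodule]
    apply lcs_succ_le'
    intro a w hw
    -- decompose w = c • v + w'
    have hw1 := hS2 hsp hyu hw
    rw [Submodule.mem_sup] at hw1
    obtain ⟨p, hp, w', hw', rfl⟩ := hw1
    rw [Submodule.mem_span_singleton] at hp
    obtain ⟨c, rfl⟩ := hp
    have hv' : v = ⁅x, ⁅x, y⁆⁆ := by rw [hv, hu]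
    rw [← hv']
    have haw' : ⁅a, w'⁆ ∈ LieModule.lowerCentralSeries ℝ L L 4 := mem_lcs_succ a hw'
    have hav : ⁅a, v⁆ ∈ LieModule.lowerCentralSeries ℝ L L 4 := by
      obtain ⟨s, t, d, hd, rfl⟩ := hdec hsp a
      have hdv : ⁅d, v⁆ ∈ LieModule.lowerCentralSeries ℝ L L 4 := by
        have hd1 := hS1 hsp hd
        rw [Submodule.mem_sup] at hd1
        obtain ⟨q, hq, e, he, hde⟩ := hd1
        rw [Submodule.mem_span_singleton] at hq
        obtain ⟨c', rfl⟩ := hq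
        have hev : ⁅e, v⁆ ∈ LieModule.lowerCentralSeries ℝ L L 4 := by
          have he1 := hS2 hsp hyu he
          rw [Submodule.mem_sup] at he1
          obtain ⟨q', hq', f, hf, hef⟩ := he1
          rw [Submodule.mem_span_singleton] at hq'
          obtain ⟨c'', rfl⟩ := hq'
          rw [← hv'] at hef
          rw [← hef, add_lie, smul_lie, lie_self, smul_zero, zero_add]
          exact mem_lcs_succ' v hf
        rw [← hde, add_lie, smul_lie, huv, smul_zero, zero_add]
        exact hev
      rw [add_lie, add_lie, smul_lie, smul_lie, hxv, hyv, smul_zero, smul_zero,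
        zero_add, zero_add]
      exact hdv
    rw [lie_add, lie_smul]
    exact Submodule.add_mem _ (Submodule.smul_mem _ _ hav) haw'
  -- the derived algebra is spanned by u and v
  have hg2span : (LieModule.lowerCentralSeries ℝ L L 1).toSubmodule ≤
      Submodule.span ℝ {u, v} := by
    refine (hS1 hsp).trans (sup_le ?_ ?_)
    · rw [Submodule.span_le]
      rintro m rfl
      exact Submodule.subset_span (by rw [← hu]; simp)
    · refine le_trans ((hS2 hsp hyu).trans (sup_le ?_ ?_)) le_rfl
      · refine Submodule.span_le.mpr ?_
        rintro m rfl
        exact Submodule.subset_span (by rw [← hv]; simp)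
      · rw [hbot3]
        simp
  -- dimension count
  have hcard2 : ({u, v} : Set L).toFinset.card ≤ 2 := by
    rw [Set.toFinset_insert, Set.toFinset_singleton]
    exact (Finset.card_insert_le _ _).trans (by simp)
  have hfin2 : Module.finrank ℝ (LieModule.lowerCentralSeries ℝ L L 1).toSubmodule ≤ 2 :=
    (Submodule.finrank_mono hg2span).trans ((finrank_span_le_card _).trans hcard2)
  have hle4 : Module.finrank ℝ L ≤ 4 := by omega
  have hli4 : LinearIndependent ℝ ![x, y, u, v] := by
    rw [Fintype.linearIndependent_iff]
    intro g hg
    rw [Fin.sum_univ_four] at hg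
    simp only [Matrix.cons_val_zero, Matrix.cons_val_one, Matrix.head_cons,
      Matrix.cons_val_two, Matrix.tail_cons, Matrix.cons_val_three] at hg
    have heq : g 0 • x + g 1 • y + g 2 • u + (g 3 • v + 0) = 0 := by
      linear_combination (norm := module) hg
    obtain ⟨h0, h1, h2, h3, -⟩ := resolve4 hsp hder2 hu2 hu3 hv3 hv4
      (Submodule.zero_mem _) heq
    intro i
    fin_cases i <;> simp [h0, h1, h2, h3]
  have hge4 : 4 ≤ Module.finrank ℝ L := by
    simpa using hli4.fintype_card_le_finrank
  have hfr : Module.finrank ℝ L = 4 := le_antisymm hle4 hge4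
  have hspan4 : ⊤ ≤ Submodule.span ℝ (Set.range ![x, y, u, v]) := by
    refine le_trans hsp (sup_le ?_ ?_)
    · rw [Submodule.span_le]
      rintro m (rfl | rfl)
      · exact Submodule.subset_span ⟨0, rfl⟩
      · exact Submodule.subset_span ⟨1, rfl⟩
    · refine hg2span.trans ?_
      rw [Submodule.span_le]
      rintro m (rfl | rfl)
      · exact Submodule.subset_span ⟨2, rfl⟩
      · exact Submodule.subset_span ⟨3, rfl⟩
  let b := basisOfTopLeSpanOfCardEqFinrank ![x, y, u, v] hspan4 (by simp [hfr])
  have hb : ⇑b = ![x, y, u, v] := coe_basisOfTopLeSpanOfCardEqFinrank _ _ _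
  refine ⟨b, ?_, ?_, ?_, ?_, ?_, ?_⟩ <;>
    simp only [hb, Matrix.cons_val_zero, Matrix.cons_val_one, Matrix.head_cons,
      Matrix.cons_val_two, Matrix.tail_cons, Matrix.cons_val_three]
  all_goals first | exact hu.symm | exact hv.symm | exact hxv | exact hyu | exact hyv | exact huv
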